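/- A set of 0-1 values x_{i,j} satisfies the MWTM ILP constraints if and only if the induced relation {(i,j) : x_{i,j} = 1} is a feasible assignment: an injection from tasks to nodes whose image is an antichain in the tree. -/

import Mathlib

attribute [local instance] Classical.propDecidable

/-- A rooted tree on a finite vertex type `V`, given by a parent function. -/
structure OrgTree (V : Type) [Fintype V] [DecidableEq V] where
  root : V
  parent : V → V
  parent_root : parent root = root
  reach : ∀ v : V, ∃ k : ℕ, parent^[k] v = root

variable {V : Type} [Fintype V] [DecidableEq V]

/-- `T.Anc u v` : `u` is a (weak) ancestor of `v`, i.e. `u` lies on the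
path from the root to `v`. -/
def OrgTree.Anc (T : OrgTree V) (u v : V) : Prop :=
  ∃ k : ℕ, T.parent^[k] v = u

/-- A leaf is a node with no children. -/
def OrgTree.IsLeaf (T : OrgTree V) (v : V) : Prop :=
  ∀ u : V, T.parent u = v → u = v

/-- An antichain: no element is a (weak) ancestor of another distinct element. -/
def OrgTree.IsAntichain (T : OrgTree V) (S : Set V) : Prop :=
  ∀ u ∈ S, ∀ v ∈ S, u ≠ v → ¬ T.Anc u v

/-- Feasibility for the LP relaxation of the MWTM ILP:
nonnegativity, per-node sums at most 1, per-task sums equal to 1, and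
for every leaf the total assignment along the root-to-leaf path at most 1. -/
def LPFeasible (T : OrgTree V) (m : ℕ) (x : V → Fin m → ℝ) : Prop :=
  (∀ i j, 0 ≤ x i j) ∧
  (∀ i : V, ∑ j : Fin m, x i j ≤ 1) ∧
  (∀ j : Fin m, ∑ i : V, x i j = 1) ∧
  (∀ k : V, T.IsLeaf k →
    ∑ i ∈ Finset.univ.filter (fun i => T.Anc i k), ∑ j : Fin m, x i j ≤ 1)

/-- An effective leaf w.r.t. `x`: a node with a positive assignment none of
whose strict descendants has a positive assignment. -/
def EffLeaf (T : OrgTree V) (m : ℕ) (x : V → Fin m → ℝ) (i : V) : Prop :=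
  (∃ j : Fin m, 0 < x i j) ∧
    ∀ v : V, T.Anc i v → v ≠ i → ∀ j : Fin m, x v j = 0

lemma OrgTree.anc_trans (T : OrgTree V) {u v w : V} (h1 : T.Anc u v) (h2 : T.Anc v w) :
    T.Anc u w := by
  obtain ⟨a, ha⟩ := h1; obtain ⟨b, hb⟩ := h2
  exact ⟨a + b, by rw [Function.iterate_add_apply, hb, ha]⟩

noncomputable def OrgTree.depth (T : OrgTree V) (v : V) : ℕ := Nat.find (T.reach v)

lemma OrgTree.depth_lt (T : OrgTree V) {u w : V} (h : T.parent u = w) (hne : u ≠ w) :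
    T.depth w < T.depth u := by
  have hur : u ≠ T.root := by
    rintro rfl; exact hne (by rw [← h, T.parent_root])
  have h0 : T.depth u ≠ 0 := by
    intro h0
    have := Nat.find_spec (T.reach u)
    rw [show T.depth u = Nat.find (T.reach u) from rfl] at h0
    rw [h0] at this; exact hur this
  obtain ⟨d, hd⟩ := Nat.exists_eq_succ_of_ne_zero h0
  have hspec : T.parent^[T.depth u] u = T.root := Nat.find_spec (T.reach u)
  rw [hd, Function.iterate_succ_apply, h] at hspec
  have : T.depth w ≤ d := Nat.find_le hspec
  omega

lemma OrgTree.exists_leaf_anc (T : OrgTree V) (v : V) :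
    ∃ k : V, T.IsLeaf k ∧ T.Anc v k := by
  classical
  have hne : (Finset.univ.filter (fun w => T.Anc v w)).Nonempty :=
    ⟨v, Finset.mem_filter.2 ⟨Finset.mem_univ _, 0, rfl⟩⟩
  obtain ⟨k, hk, hmax⟩ := Finset.exists_max_image _ T.depth hne
  have hk' : T.Anc v k := (Finset.mem_filter.1 hk).2
  refine ⟨k, ?_, hk'⟩
  intro u hu
  by_contra hune
  have hanc : T.Anc v u := T.anc_trans hk' ⟨1, by simpa using hu⟩
  have hmem : u ∈ Finset.univ.filter (fun w => T.Anc v w) := by simp [hanc]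
  have := hmax u hmem
  have := T.depth_lt hu hune
  omega

lemma OrgTree.anc_total (T : OrgTree V) {u v w : V} (h1 : T.Anc u w) (h2 : T.Anc v w) :
    T.Anc u v ∨ T.Anc v u := by
  obtain ⟨a, ha⟩ := h1; obtain ⟨b, hb⟩ := h2
  rcases le_total a b with hab | hab
  · right
    refine ⟨b - a, ?_⟩
    rw [← ha, ← Function.iterate_add_apply, Nat.sub_add_cancel hab, hb]
  · left
    refine ⟨a - b, ?_⟩
    rw [← hb, ← Function.iterate_add_apply, Nat.sub_add_cancel hab, ha]

/-- 0-1 values `x` satisfy the MWTM ILP constraints iff the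
relation `{(i,j) : x_{i,j} = 1}` is a feasible assignment: an injection from
tasks to nodes whose image is an antichain in the tree. -/
theorem ilp_iff_feasible_assignment (T : OrgTree V) (m : ℕ)
    (x : V → Fin m → ℝ) (h01 : ∀ i j, x i j = 0 ∨ x i j = 1) :
    LPFeasible T m x ↔
      ∃ f : Fin m → V, Function.Injective f ∧ T.IsAntichain (Set.range f) ∧
        ∀ (i : V) (j : Fin m), (x i j = 1 ↔ f j = i) := by
  constructor
  · rintro ⟨hnn, hnode, htask, hleaf⟩
    -- existence of an assigned node for each task
    have hex : ∀ j : Fin m, ∃ i, x i j = 1 := by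
      intro j
      by_contra h
      push_neg at h
      have hz : ∀ i, x i j = 0 := fun i => (h01 i j).resolve_right (h i)
      have hs := htask j
      rw [Finset.sum_eq_zero (fun i _ => hz i)] at hs
      norm_num at hs
    have huniq : ∀ (j : Fin m) (i i' : V), x i j = 1 → x i' j = 1 → i = i' := by
      intro j i i' h1 h2
      by_contra hne
      have h2le : (2 : ℝ) ≤ ∑ a, x a j := by
        calc (2 : ℝ) = ∑ a ∈ ({i, i'} : Finset V), x a j := by
              rw [Finset.sum_pair hne, h1, h2]; norm_num
          _ ≤ ∑ a, x a j :=
              Finset.sum_le_sum_of_subset_of_nonneg (Finset.subset_univ _)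
                (fun a _ _ => hnn a j)
      have := htask j
      linarith
    choose f hf using hex
    have hiff : ∀ (i : V) (j : Fin m), (x i j = 1 ↔ f j = i) := by
      intro i j
      constructor
      · intro h; exact (huniq j (f j) i (hf j) h)
      · rintro rfl; exact hf j
    have hinj : Function.Injective f := by
      intro j j' hjj
      by_contra hne
      have h2le : (2 : ℝ) ≤ ∑ b, x (f j) b := by
        calc (2 : ℝ) = ∑ b ∈ ({j, j'} : Finset (Fin m)), x (f j) b := by
              rw [Finset.sum_pair hne, hf j, hjj, hf j']; norm_num
          _ ≤ ∑ b, x (f j) b :=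
              Finset.sum_le_sum_of_subset_of_nonneg (Finset.subset_univ _)
                (fun a _ _ => hnn _ a)
      have := hnode (f j)
      linarith
    refine ⟨f, hinj, ?_, hiff⟩
    rintro u ⟨j, rfl⟩ v ⟨j', rfl⟩ hne hanc
    obtain ⟨k, hkleaf, hkanc⟩ := T.exists_leaf_anc (f j')
    have hL := hleaf k hkleaf
    have hmemu : f j ∈ Finset.univ.filter (fun i => T.Anc i k) := by
      simp [T.anc_trans hanc hkanc]
    have hmemv : f j' ∈ Finset.univ.filter (fun i => T.Anc i k) := by
      simp [hkanc]
    have hgu : (1 : ℝ) ≤ ∑ b, x (f j) b := by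
      calc (1 : ℝ) = x (f j) j := (hf j).symm
        _ ≤ ∑ b, x (f j) b := Finset.single_le_sum (f := fun b => x (f j) b)
            (fun b _ => hnn _ b) (Finset.mem_univ j)
    have hgv : (1 : ℝ) ≤ ∑ b, x (f j') b := by
      calc (1 : ℝ) = x (f j') j' := (hf j').symm
        _ ≤ ∑ b, x (f j') b := Finset.single_le_sum (f := fun b => x (f j') b)
            (fun b _ => hnn _ b) (Finset.mem_univ j')
    have hsub : ({f j, f j'} : Finset V) ⊆ Finset.univ.filter (fun i => T.Anc i k) := by
      intro a ha
      rcases Finset.mem_insert.1 ha with rfl | ha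
      · exact hmemu
      · rw [Finset.mem_singleton.1 ha]; exact hmemv
    have h2le : (2 : ℝ) ≤ ∑ i ∈ Finset.univ.filter (fun i => T.Anc i k), ∑ b, x i b := by
      calc (2 : ℝ) ≤ ∑ a ∈ ({f j, f j'} : Finset V), ∑ b, x a b := by
            rw [Finset.sum_pair hne]; linarith
        _ ≤ _ :=
            Finset.sum_le_sum_of_subset_of_nonneg hsub
              (fun a _ _ => Finset.sum_nonneg (fun b _ => hnn a b))
    linarith
  · rintro ⟨f, hinj, hanti, hiff⟩
    have hval : ∀ i j, x i j = if f j = i then 1 else 0 := by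
      intro i j
      by_cases h : f j = i
      · simp [h, (hiff i j).2 h]
      · simp only [h, if_false]
        rcases h01 i j with h0 | h1
        · exact h0
        · exact absurd ((hiff i j).1 h1) h
    have hnodesum : ∀ i : V, ∑ j : Fin m, x i j ≤ 1 := by
      intro i
      have : ∑ j : Fin m, x i j =
          ((Finset.univ.filter (fun j => f j = i)).card : ℝ) := by
        simp_rw [hval i]
        rw [Finset.sum_boole]
      rw [this]
      have hcard : (Finset.univ.filter (fun j => f j = i)).card ≤ 1 := by
        apply Finset.card_le_one.2
        intro a ha b hb
        exact hinj ((Finset.mem_filter.1 ha).2.trans (Finset.mem_filter.1 hb).2.symm)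
      exact_mod_cast hcard
    refine ⟨?_, hnodesum, ?_, ?_⟩
    · intro i j
      rw [hval i j]
      split <;> norm_num
    · intro j
      simp_rw [hval _ j]
      simp
    · intro k hk
      by_cases hex : ∃ j0 : Fin m, T.Anc (f j0) k
      · obtain ⟨j0, hj0⟩ := hex
        have heq : ∑ i ∈ Finset.univ.filter (fun i => T.Anc i k), ∑ j : Fin m, x i j
            = ∑ j : Fin m, x (f j0) j := by
          apply Finset.sum_eq_single (f j0)
          · intro i hi hine
            apply Finset.sum_eq_zero
            intro j _
            rw [hval i j]
            split
            · next h =>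
              exfalso
              have hik : T.Anc i k := (Finset.mem_filter.1 hi).2
              rcases T.anc_total hj0 hik with h1 | h1
              · rcases eq_or_ne (f j0) i with he | he
                · exact hine he.symm
                · exact hanti (f j0) ⟨j0, rfl⟩ i ⟨j, h⟩ he h1
              · rcases eq_or_ne i (f j0) with he | he
                · exact hine he
                · exact hanti i ⟨j, h⟩ (f j0) ⟨j0, rfl⟩ he h1
            · rfl
          · intro h
            exact absurd (by simp [hj0] : f j0 ∈ Finset.univ.filter (fun i => T.Anc i k)) h
        rw [heq]
        exact hnodesum (f j0)
      · push_neg at hex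
        have heq : ∑ i ∈ Finset.univ.filter (fun i => T.Anc i k), ∑ j : Fin m, x i j = 0 := by
          apply Finset.sum_eq_zero
          intro i hi
          apply Finset.sum_eq_zero
          intro j _
          rw [hval i j]
          split
          · next h =>
            exact absurd ((Finset.mem_filter.1 hi).2) (h ▸ hex j)
          · rfl
        rw [heq]; norm_num
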